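/- (Second order estimate with an independent shift.) Let F : ℝ → ℝ be continuously differentiable with L-Lipschitz derivative F′. Let X be a real random variable with P(X ∈ [a,b]) = 1, let Λ be uniformly distributed on [0,1] and independent of X, and let Z be a square-integrable real random variable independent of the pair (X, Λ). Then for every grid Γ in [a,b]: |E F(X + Z) − E F(J_Γ(X,Λ) + Z)| ≤ L · E|X − J_Γ(X,Λ)|². -/

import Mathlib

open MeasureTheory ProbabilityTheory

/-- Index `j*(ξ)` of the segment `[x_j, x_{j+1})` of the grid containing `ξ`
(with default value `N`, corresponding to the closed last segment). -/
noncomputable def jstar (N : ℕ) (x : ℕ → ℝ) (ξ : ℝ) : ℕ :=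
  if h : ∃ j, j ≤ N ∧ x j ≤ ξ ∧ ξ < x (j + 1) then h.choose else N

/-- The dual quantization operator `J_Γ(ξ, λ)` associated with the grid
`x 0 ≤ x 1 ≤ … ≤ x (N+1)`. -/
noncomputable def dualQ (N : ℕ) (x : ℕ → ℝ) (ξ lam : ℝ) : ℝ :=
  if x (jstar N x ξ + 1) = x (jstar N x ξ) then ξ
  else if lam < (x (jstar N x ξ + 1) - ξ) / (x (jstar N x ξ + 1) - x (jstar N x ξ)) then
    x (jstar N x ξ)
  else x (jstar N x ξ + 1)

section Det
variable {N : ℕ} {x : ℕ → ℝ} {a b : ℝ}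

lemma grid_mono (hmono : ∀ j ≤ N, x j ≤ x (j + 1)) :
    ∀ i j, i ≤ j → j ≤ N + 1 → x i ≤ x j := by
  intro i j hij hj
  induction j with
  | zero => simp [Nat.le_zero.mp hij]
  | succ k ih =>
    rcases Nat.lt_or_ge i (k+1) with h | h
    · exact le_trans (ih (Nat.lt_succ_iff.mp h) (le_trans (Nat.le_succ k) hj))
        (hmono k (Nat.succ_le_succ_iff.mp hj))
    · have : i = k + 1 := le_antisymm hij h
      simp [this]

lemma jstar_le (N : ℕ) (x : ℕ → ℝ) (ξ : ℝ) : jstar N x ξ ≤ N := by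
  unfold jstar
  split
  · next h => exact h.choose_spec.1
  · exact le_rfl

/-- uniqueness of the bracket index -/
lemma bracket_unique (hmono : ∀ j ≤ N, x j ≤ x (j + 1)) {ξ : ℝ} {i j : ℕ}
    (hi : i ≤ N ∧ x i ≤ ξ ∧ ξ < x (i + 1)) (hj : j ≤ N ∧ x j ≤ ξ ∧ ξ < x (j + 1)) : i = j := by
  by_contra hne
  rcases Nat.lt_or_ge i j with h | h
  · have : x (i+1) ≤ x j := grid_mono hmono (i+1) j h (Nat.le_succ_of_le hj.1)
    linarith [hi.2.2, hj.2.1]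
  · have hji : j < i := lt_of_le_of_ne h (Ne.symm hne)
    have : x (j+1) ≤ x i := grid_mono hmono (j+1) i hji (Nat.le_succ_of_le hi.1)
    linarith [hj.2.2, hi.2.1]

lemma jstar_eq (hmono : ∀ j ≤ N, x j ≤ x (j + 1)) {ξ : ℝ} {j : ℕ}
    (hj : j ≤ N) (h1 : x j ≤ ξ) (h2 : ξ < x (j + 1)) : jstar N x ξ = j := by
  have h : ∃ i, i ≤ N ∧ x i ≤ ξ ∧ ξ < x (i + 1) := ⟨j, hj, h1, h2⟩
  unfold jstar
  rw [dif_pos h]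
  exact bracket_unique hmono h.choose_spec ⟨hj, h1, h2⟩

lemma jstar_bracket (hmono : ∀ j ≤ N, x j ≤ x (j + 1)) (hx0 : x 0 = a) (hxN : x (N + 1) = b)
    {ξ : ℝ} (hξ : ξ ∈ Set.Icc a b) :
    x (jstar N x ξ) ≤ ξ ∧ ξ ≤ x (jstar N x ξ + 1) := by
  unfold jstar
  split
  · next h => exact ⟨h.choose_spec.2.1, le_of_lt h.choose_spec.2.2⟩
  · next h =>
    -- no bracket: then ξ = b
    push_neg at h
    have hbξ : b ≤ ξ := by
      by_contra hc
      push_neg at hc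
      classical
      set p : ℕ → Prop := fun j => x j ≤ ξ with hp
      have hp0 : p 0 := by rw [hp]; simp only []; rw [hx0]; exact hξ.1
      set j0 := Nat.findGreatest p N with hj0
      have hj0N : j0 ≤ N := Nat.findGreatest_le N
      have hj0spec : p j0 := Nat.findGreatest_spec (Nat.zero_le N) hp0
      have hlt : ξ < x (j0 + 1) := by
        rcases Nat.lt_or_ge j0 N with hlt | hge
        · have := Nat.findGreatest_is_greatest (Nat.lt_succ_self j0) (Nat.succ_le_of_lt hlt)
          exact lt_of_not_ge this
        · have hj0 : j0 = N := le_antisymm hj0N hge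
          rw [hj0, hxN]; exact hc
      exact absurd (h j0 hj0N hj0spec) (not_le.mpr hlt)
    have hξb : ξ = b := le_antisymm hξ.2 hbξ
    constructor
    · calc x N ≤ x (N+1) := hmono N le_rfl
        _ = b := hxN
        _ = ξ := hξb.symm
    · rw [hxN, hξb]


lemma grid_mem (hmono : ∀ j ≤ N, x j ≤ x (j + 1)) (hx0 : x 0 = a) (hxN : x (N + 1) = b)
    {j : ℕ} (hj : j ≤ N + 1) : x j ∈ Set.Icc a b :=
  ⟨hx0 ▸ grid_mono hmono 0 j (Nat.zero_le j) hj,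
   hxN ▸ grid_mono hmono j (N+1) hj le_rfl⟩

lemma dualQ_mem (hmono : ∀ j ≤ N, x j ≤ x (j + 1)) (hx0 : x 0 = a) (hxN : x (N + 1) = b)
    {ξ : ℝ} (hξ : ξ ∈ Set.Icc a b) (lam : ℝ) : dualQ N x ξ lam ∈ Set.Icc a b := by
  unfold dualQ
  have hj := jstar_le N x ξ
  split
  · exact hξ
  split
  · exact grid_mem hmono hx0 hxN (Nat.le_succ_of_le hj)
  · exact grid_mem hmono hx0 hxN (Nat.succ_le_succ hj)

/-- the explicit formula for segment `j` -/
noncomputable def dqf (x : ℕ → ℝ) (j : ℕ) (p : ℝ × ℝ) : ℝ :=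
  if x (j + 1) = x j then p.1
  else if p.2 < (x (j + 1) - p.1) / (x (j + 1) - x j) then x j
  else x (j + 1)

lemma measurable_dqf (x : ℕ → ℝ) (j : ℕ) : Measurable (dqf x j) := by
  unfold dqf
  by_cases h : x (j+1) = x j
  · simpa [h] using measurable_fst
  · simp only [h, if_false]
    refine Measurable.ite ?_ measurable_const measurable_const
    exact measurableSet_lt measurable_snd
      (((measurable_const.sub measurable_fst)).div measurable_const)

lemma jstar_measurableSet (hmono : ∀ j ≤ N, x j ≤ x (j + 1)) (j : ℕ) :
    MeasurableSet {ξ : ℝ | jstar N x ξ = j} := by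
  classical
  have key : {ξ : ℝ | jstar N x ξ = j} =
      ({ξ : ℝ | j ≤ N ∧ x j ≤ ξ ∧ ξ < x (j+1)}) ∪
      (if j = N then (⋂ i ∈ Finset.range (N+1), {ξ : ℝ | x i ≤ ξ ∧ ξ < x (i+1)}ᶜ) else ∅) := by
    ext ξ
    simp only [Set.mem_setOf_eq, Set.mem_union]
    constructor
    · intro hjs
      by_cases h : ∃ i, i ≤ N ∧ x i ≤ ξ ∧ ξ < x (i + 1)
      · left
        obtain ⟨i, hi⟩ := h
        have : jstar N x ξ = i := jstar_eq hmono hi.1 hi.2.1 hi.2.2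
        rw [hjs] at this; subst this; exact hi
      · right
        have hjN : jstar N x ξ = N := by unfold jstar; rw [dif_neg h]
        rw [← hjs, hjN, if_pos rfl]
        simp only [Set.mem_iInter, Set.mem_compl_iff, Set.mem_setOf_eq, Finset.mem_range]
        intro i hi hle
        exact h ⟨i, Nat.lt_succ_iff.mp hi, hle⟩
    · rintro (h | h)
      · exact jstar_eq hmono h.1 h.2.1 h.2.2
      · by_cases hjN : j = N
        · rw [if_pos hjN] at h
          simp only [Set.mem_iInter, Set.mem_compl_iff, Set.mem_setOf_eq, Finset.mem_range] at h
          have : ¬ ∃ i, i ≤ N ∧ x i ≤ ξ ∧ ξ < x (i + 1) := by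
            rintro ⟨i, hi, h1, h2⟩
            exact h i (Nat.lt_succ_of_le hi) ⟨h1, h2⟩
          unfold jstar; rw [dif_neg this, hjN]
        · rw [if_neg hjN] at h; exact absurd h (Set.notMem_empty ξ)
  rw [key]
  apply MeasurableSet.union
  · by_cases hj : j ≤ N
    · have : {ξ : ℝ | j ≤ N ∧ x j ≤ ξ ∧ ξ < x (j+1)} = Set.Ico (x j) (x (j+1)) := by
        ext ξ; simp [Set.mem_Ico, hj]
      rw [this]; exact measurableSet_Ico
    · have : {ξ : ℝ | j ≤ N ∧ x j ≤ ξ ∧ ξ < x (j+1)} = ∅ := by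
        ext ξ; simp [hj]
      rw [this]; exact MeasurableSet.empty
  · split
    · refine MeasurableSet.biInter (Set.to_countable _) (fun i _ => ?_)
      have : {ξ : ℝ | x i ≤ ξ ∧ ξ < x (i+1)} = Set.Ico (x i) (x (i+1)) := by
        ext ξ; simp [Set.mem_Ico]
      rw [this]
      exact measurableSet_Ico.compl
    · exact MeasurableSet.empty

lemma measurable_dualQ (hmono : ∀ j ≤ N, x j ≤ x (j + 1)) :
    Measurable (fun p : ℝ × ℝ => dualQ N x p.1 p.2) := by
  classical
  have key : (fun p : ℝ × ℝ => dualQ N x p.1 p.2) =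
      fun p => ∑ j ∈ Finset.range (N+1), if jstar N x p.1 = j then dqf x j p else 0 := by
    funext p
    rw [Finset.sum_ite_eq (Finset.range (N+1)) (jstar N x p.1)]
    rw [if_pos (Finset.mem_range.mpr (Nat.lt_succ_of_le (jstar_le N x p.1)))]
    rfl
  rw [key]
  apply Finset.measurable_sum
  intro j _
  refine Measurable.ite ?_ (measurable_dqf x j) measurable_const
  exact (jstar_measurableSet hmono j).preimage measurable_fst


instance : IsProbabilityMeasure (volume.restrict (Set.Icc (0:ℝ) 1)) :=
  ⟨by rw [Measure.restrict_apply_univ, Real.volume_Icc]; norm_num⟩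

lemma ite_eq_indicator_add (p c d : ℝ) :
    (fun lam : ℝ => if lam < p then c else d) =
      fun lam => Set.indicator (Set.Iio p) (fun _ => c - d) lam + d := by
  funext lam
  by_cases h : lam < p
  · simp [Set.indicator_of_mem (Set.mem_Iio.mpr h), h]
  · simp [Set.indicator_of_notMem (fun hc => h (Set.mem_Iio.mp hc)), h]

lemma integrable_ite_lt (p c d : ℝ) :
    Integrable (fun lam : ℝ => if lam < p then c else d) (volume.restrict (Set.Icc (0:ℝ) 1)) := by
  rw [ite_eq_indicator_add]
  exact ((integrable_const (c - d)).indicator measurableSet_Iio).add (integrable_const d)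

lemma integrable_dualQ_lam (ξ : ℝ) :
    Integrable (fun lam => dualQ N x ξ lam) (volume.restrict (Set.Icc (0:ℝ) 1)) := by
  unfold dualQ
  split
  · exact integrable_const ξ
  · exact integrable_ite_lt _ _ _

lemma integral_ite_lt {p : ℝ} (hp0 : 0 ≤ p) (hp1 : p ≤ 1) (c d : ℝ) :
    ∫ lam, (if lam < p then c else d) ∂(volume.restrict (Set.Icc (0:ℝ) 1))
      = p * (c - d) + d := by
  rw [ite_eq_indicator_add]
  rw [integral_add (((integrable_const (c - d)).indicator measurableSet_Iio)) (integrable_const d)]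
  rw [integral_indicator_const (c - d) measurableSet_Iio]
  have hset : Set.Iio p ∩ Set.Icc (0:ℝ) 1 = Set.Ico 0 p := by
    ext t
    simp only [Set.mem_inter_iff, Set.mem_Iio, Set.mem_Icc, Set.mem_Ico]
    constructor
    · rintro ⟨h1, h2, _⟩; exact ⟨h2, h1⟩
    · rintro ⟨h1, h2⟩; exact ⟨h2, h1, le_trans (le_of_lt h2) hp1⟩
  rw [measureReal_restrict_apply measurableSet_Iio, hset, Real.volume_real_Ico]
  simp only [sub_zero, integral_const, measure_univ, ENNReal.toReal_one, one_smul, smul_eq_mul]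
  simp [max_eq_left hp0]

lemma integral_dualQ (hmono : ∀ j ≤ N, x j ≤ x (j + 1)) (hx0 : x 0 = a) (hxN : x (N + 1) = b)
    {ξ : ℝ} (hξ : ξ ∈ Set.Icc a b) :
    ∫ lam, dualQ N x ξ lam ∂(volume.restrict (Set.Icc (0:ℝ) 1)) = ξ := by
  obtain ⟨hc, hd⟩ := jstar_bracket hmono hx0 hxN hξ
  unfold dualQ
  set j := jstar N x ξ with hj
  by_cases heq : x (j + 1) = x j
  · simp only [if_pos heq]
    simp
  · simp only [if_neg heq]
    have hlt : x j < x (j + 1) := lt_of_le_of_ne (hmono j (jstar_le N x ξ)) (Ne.symm heq)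
    set p := (x (j + 1) - ξ) / (x (j + 1) - x j) with hp
    have hsub : 0 < x (j+1) - x j := by linarith
    have hp0 : 0 ≤ p := div_nonneg (by linarith) (le_of_lt hsub)
    have hp1 : p ≤ 1 := by
      rw [hp, div_le_one hsub]; linarith
    rw [integral_ite_lt hp0 hp1]
    rw [hp]
    field_simp
    ring

lemma taylor_bound {F : ℝ → ℝ} {L : NNReal} (hF : ContDiff ℝ 1 F)
    (hFlip : LipschitzWith L (deriv F)) (u v : ℝ) :
    |F v - F u - deriv F u * (v - u)| ≤ (L : ℝ) * |v - u| ^ 2 := by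
  have hFd : Differentiable ℝ F := hF.differentiable one_ne_zero
  rcases eq_or_ne u v with rfl | hne
  · simp
  have key : ∃ c, |c - u| ≤ |v - u| ∧ deriv F c = (F v - F u) / (v - u) := by
    rcases lt_or_gt_of_ne hne with h | h
    · obtain ⟨c, hc, hceq⟩ := exists_deriv_eq_slope F h (hFd.continuous.continuousOn)
        (hFd.differentiableOn)
      refine ⟨c, ?_, hceq⟩
      rw [abs_of_pos (by linarith [hc.1] : (0:ℝ) < v - u), abs_of_pos (by linarith [hc.1, hc.2])]
      linarith [hc.2]
    · obtain ⟨c, hc, hceq⟩ := exists_deriv_eq_slope F h (hFd.continuous.continuousOn)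
        (hFd.differentiableOn)
      refine ⟨c, ?_, ?_⟩
      · rw [abs_of_neg (by linarith [hc.2] : v - u < 0),
          abs_of_neg (by linarith [hc.1, hc.2] : c - u < 0)]
        linarith [hc.1]
      · rw [hceq]
        rw [div_eq_div_iff (by linarith : u - v ≠ 0) (by intro hh; apply hne; linarith : v - u ≠ 0)]
        ring
  obtain ⟨c, hcu, hceq⟩ := key
  have hvu : v - u ≠ 0 := fun hh => hne (by linarith)
  have heq : F v - F u - deriv F u * (v - u) = (deriv F c - deriv F u) * (v - u) := by
    have : F v - F u = deriv F c * (v - u) := by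
      rw [hceq, div_mul_cancel₀ _ hvu]
    rw [this]; ring
  rw [heq, abs_mul]
  have hlip : |deriv F c - deriv F u| ≤ (L : ℝ) * |c - u| := by
    have := hFlip.dist_le_mul c u
    rwa [Real.dist_eq, Real.dist_eq] at this
  calc |deriv F c - deriv F u| * |v - u| ≤ ((L : ℝ) * |c - u|) * |v - u| := by
        apply mul_le_mul_of_nonneg_right hlip (abs_nonneg _)
    _ ≤ ((L : ℝ) * |v - u|) * |v - u| := by
        apply mul_le_mul_of_nonneg_right _ (abs_nonneg _)
        exact mul_le_mul_of_nonneg_left hcu L.2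
    _ = (L : ℝ) * |v - u| ^ 2 := by ring



end Det

set_option maxHeartbeats 2000000 in
/-- **Second order estimate with an independent shift.** Let `F : ℝ → ℝ` be
continuously differentiable with `L`-Lipschitz derivative. Let `X` be a real random variable
with `P(X ∈ [a,b]) = 1`, let `Λ` be uniformly distributed on `[0,1]` and independent of `X`,
and let `Z` be a square-integrable real random variable independent of the pair `(X, Λ)`.
Then for every grid `Γ` in `[a,b]`:
`|E F(X + Z) − E F(J_Γ(X,Λ) + Z)| ≤ L · E|X − J_Γ(X,Λ)|²`. -/
theorem dualQ_second_order_shift {Ω : Type*} [MeasurableSpace Ω] (P : Measure Ω)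
    [IsProbabilityMeasure P]
    (a b : ℝ) (hab : a < b) (N : ℕ) (x : ℕ → ℝ)
    (hmono : ∀ j ≤ N, x j ≤ x (j + 1)) (hx0 : x 0 = a) (hxN : x (N + 1) = b)
    (X : Ω → ℝ) (hXmeas : Measurable X) (hXab : ∀ᵐ ω ∂P, X ω ∈ Set.Icc a b)
    (Λ : Ω → ℝ) (hΛmeas : Measurable Λ)
    (hΛ : Measure.map Λ P = volume.restrict (Set.Icc (0 : ℝ) 1))
    (hindepXΛ : IndepFun X Λ P)
    (Z : Ω → ℝ) (hZmeas : Measurable Z) (hZ2 : Integrable (fun ω => (Z ω) ^ 2) P)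
    (hindepZ : IndepFun (fun ω => (X ω, Λ ω)) Z P)
    (F : ℝ → ℝ) (L : NNReal) (hF : ContDiff ℝ 1 F) (hFlip : LipschitzWith L (deriv F)) :
    |∫ ω, F (X ω + Z ω) ∂P - ∫ ω, F (dualQ N x (X ω) (Λ ω) + Z ω) ∂P| ≤
      (L : ℝ) * ∫ ω, |X ω - dualQ N x (X ω) (Λ ω)| ^ 2 ∂P := by
  classical
  set Q : ℝ × ℝ → ℝ := fun p => dualQ N x p.1 p.2 with hQ
  set Y : Ω → ℝ := fun ω => dualQ N x (X ω) (Λ ω) with hY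
  have hQmeas : Measurable Q := measurable_dualQ hmono
  have hYmeas : Measurable Y := hQmeas.comp (hXmeas.prodMk hΛmeas)
  have hYab : ∀ᵐ ω ∂P, Y ω ∈ Set.Icc a b :=
    hXab.mono (fun ω h => dualQ_mem hmono hx0 hxN h (Λ ω))
  have hderiv_cont : Continuous (deriv F) := hFlip.continuous
  have hZ1 : Integrable Z P := by
    refine Integrable.mono' ((integrable_const 1).add hZ2) hZmeas.aestronglyMeasurable
      (Filter.Eventually.of_forall (fun ω => ?_))
    rw [Real.norm_eq_abs]
    simp only [Pi.add_apply]
    nlinarith [sq_abs (Z ω), sq_nonneg (|Z ω| - 1)]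
  have hZabs : Integrable (fun ω => |Z ω|) P := hZ1.abs
  set C0 : ℝ := |deriv F 0| with hC0
  set M : ℝ := max |a| |b| with hMdef
  have hM0 : 0 ≤ M := le_trans (abs_nonneg a) (le_max_left _ _)
  have hM : ∀ ξ ∈ Set.Icc a b, |ξ| ≤ M := by
    intro ξ hξ
    rw [abs_le]
    constructor
    · calc -M ≤ -|a| := neg_le_neg (le_max_left _ _)
        _ ≤ a := neg_abs_le a
        _ ≤ ξ := hξ.1
    · calc ξ ≤ b := hξ.2
        _ ≤ |b| := le_abs_self b
        _ ≤ M := le_max_right _ _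
  have hderiv_bound : ∀ t, |deriv F t| ≤ C0 + L * |t| := by
    intro t
    have h1 := hFlip.dist_le_mul t 0
    rw [Real.dist_eq, Real.dist_eq, sub_zero] at h1
    have h2 : |deriv F t| - |deriv F 0| ≤ |deriv F t - deriv F 0| := abs_sub_abs_le_abs_sub _ _
    rw [hC0]; linarith
  have hFq : ∀ t : ℝ, |F t| ≤ |F 0| + C0 * |t| + L * t ^ 2 := by
    intro t
    have h := taylor_bound hF hFlip 0 t
    simp only [sub_zero] at h
    have e : F t = (F t - F 0 - deriv F 0 * t) + F 0 + deriv F 0 * t := by ring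
    calc |F t| ≤ |F t - F 0 - deriv F 0 * t| + |F 0| + |deriv F 0 * t| := by
          conv_lhs => rw [e]
          exact le_trans (abs_add_le _ _) (add_le_add_left (abs_add_le _ _) _)
      _ ≤ (L : ℝ) * t ^ 2 + |F 0| + C0 * |t| := by
          rw [abs_mul]
          have : (L:ℝ) * |t|^2 = L * t^2 := by rw [sq_abs]
          exact add_le_add (add_le_add_left (by rw [← this]; exact h) _) le_rfl
      _ = |F 0| + C0 * |t| + L * t ^ 2 := by ring
  -- integrability of F along shifted bounded variables
  have hFint : ∀ (V : Ω → ℝ), Measurable V → (∀ᵐ ω ∂P, V ω ∈ Set.Icc a b) →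
      Integrable (fun ω => F (V ω + Z ω)) P := by
    intro V hVmeas hVab
    refine Integrable.mono'
      (g := fun ω => (|F 0| + C0 * M + (L:ℝ) * (2*M^2)) + C0 * |Z ω| + (L:ℝ)*2 * (Z ω)^2)
      (((integrable_const _).add (hZabs.const_mul _)).add (hZ2.const_mul _))
      (hF.continuous.measurable.comp (hVmeas.add hZmeas)).aestronglyMeasurable ?_
    filter_upwards [hVab] with ω hω
    rw [Real.norm_eq_abs]
    have h1 := hFq (V ω + Z ω)
    have h2 : |V ω + Z ω| ≤ M + |Z ω| := le_trans (abs_add_le _ _) (by gcongr; exact hM _ hω)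
    have h3 : (V ω + Z ω)^2 ≤ 2*M^2 + 2*(Z ω)^2 := by
      have hu := mul_le_mul h2 h2 (abs_nonneg _) (by positivity : (0:ℝ) ≤ M + |Z ω|)
      have h6 : |V ω + Z ω| * |V ω + Z ω| = (V ω + Z ω)^2 := by rw [← sq_abs]; ring
      have h7 : |Z ω| * |Z ω| = (Z ω)^2 := by rw [← sq_abs]; ring
      nlinarith [sq_nonneg (M - |Z ω|)]
    have hL0 : (0:ℝ) ≤ L := L.coe_nonneg
    have hC00 : 0 ≤ C0 := abs_nonneg _
    nlinarith [mul_le_mul_of_nonneg_left h2 hC00, mul_le_mul_of_nonneg_left h3 hL0]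
  have hintX : Integrable (fun ω => F (X ω + Z ω)) P := hFint X hXmeas hXab
  have hintY : Integrable (fun ω => F (Y ω + Z ω)) P := hFint Y hYmeas hYab
  have hYXbound : ∀ᵐ ω ∂P, |Y ω - X ω| ≤ b - a := by
    filter_upwards [hXab, hYab] with ω h1 h2
    rw [abs_le]; constructor <;> [linarith [h1.2, h2.1]; linarith [h1.1, h2.2]]
  have hintG : Integrable (fun ω => deriv F (X ω + Z ω) * (Y ω - X ω)) P := by
    refine Integrable.mono'
      (g := fun ω => ((C0 + L*M) * (b-a)) + ((L:ℝ) * (b-a)) * |Z ω|)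
      ((integrable_const _).add (hZabs.const_mul _))
      ((hderiv_cont.measurable.comp (hXmeas.add hZmeas)).mul
        (hYmeas.sub hXmeas)).aestronglyMeasurable ?_
    filter_upwards [hXab, hYXbound] with ω h1 h2
    rw [Real.norm_eq_abs, abs_mul]
    have hd : |deriv F (X ω + Z ω)| ≤ C0 + L*M + L*|Z ω| := by
      have h3 := hderiv_bound (X ω + Z ω)
      have h4 : |X ω + Z ω| ≤ M + |Z ω| := le_trans (abs_add_le _ _) (by gcongr; exact hM _ h1)
      have h5 := mul_le_mul_of_nonneg_left h4 L.coe_nonneg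
      linarith
    have hL0 : (0:ℝ) ≤ L := L.2
    have hC00 : 0 ≤ C0 := abs_nonneg _
    have hba : (0:ℝ) ≤ b - a := by linarith
    calc |deriv F (X ω + Z ω)| * |Y ω - X ω| ≤ (C0 + L*M + L*|Z ω|) * (b - a) := by
          apply mul_le_mul hd h2 (abs_nonneg _)
          positivity
      _ = ((C0 + L*M) * (b-a)) + ((L:ℝ) * (b-a)) * |Z ω| := by ring
  have hintD : Integrable (fun ω => F (Y ω + Z ω) - F (X ω + Z ω)
      - deriv F (X ω + Z ω) * (Y ω - X ω)) P := (hintY.sub hintX).sub hintG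
  have hsq : Integrable (fun ω => |X ω - Y ω| ^ 2) P := by
    refine Integrable.mono' (integrable_const ((b-a)^2))
      (((hXmeas.sub hYmeas).abs.pow_const 2)).aestronglyMeasurable ?_
    filter_upwards [hYXbound] with ω h2
    rw [Real.norm_eq_abs, abs_of_nonneg (by positivity)]
    have : |X ω - Y ω| = |Y ω - X ω| := abs_sub_comm _ _
    rw [this]
    exact pow_le_pow_left₀ (abs_nonneg _) h2 2
  -- KEY: the first-order term vanishes
  have hzero : ∫ ω, deriv F (X ω + Z ω) * (Y ω - X ω) ∂P = 0 := by
    set μX := P.map X with hμX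
    set μZ := P.map Z with hμZ
    set μΛ : Measure ℝ := volume.restrict (Set.Icc (0:ℝ) 1) with hμΛ
    haveI : IsProbabilityMeasure μX := Measure.isProbabilityMeasure_map hXmeas.aemeasurable
    haveI : IsProbabilityMeasure μZ := Measure.isProbabilityMeasure_map hZmeas.aemeasurable
    have h1 : P.map (fun ω => (X ω, Λ ω)) = μX.prod μΛ := by
      rw [hμX, ← hΛ]
      exact (indepFun_iff_map_prod_eq_prod_map_map hXmeas.aemeasurable
        hΛmeas.aemeasurable).mp hindepXΛ
    have h2 : P.map (fun ω => ((X ω, Λ ω), Z ω)) = (μX.prod μΛ).prod μZ := by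
      rw [hμZ, ← h1]
      exact (indepFun_iff_map_prod_eq_prod_map_map (hXmeas.prodMk hΛmeas).aemeasurable
        hZmeas.aemeasurable).mp hindepZ
    set π := (μX.prod μΛ).prod μZ with hπ
    set g : (ℝ × ℝ) × ℝ → ℝ := fun q => deriv F (q.1.1 + q.2) * (Q q.1 - q.1.1) with hg
    have hgmeas : Measurable g :=
      (hderiv_cont.measurable.comp ((measurable_fst.comp measurable_fst).add
        measurable_snd)).mul ((hQmeas.comp measurable_fst).sub
        (measurable_fst.comp measurable_fst))
    have hXaeμ : ∀ᵐ ξ ∂μX, ξ ∈ Set.Icc a b := by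
      rw [hμX]
      exact (ae_map_iff hXmeas.aemeasurable measurableSet_Icc).mpr hXab
    have haeπ : ∀ᵐ q ∂π, q.1.1 ∈ Set.Icc a b := by
      have hmm : π.map (Prod.fst ∘ Prod.fst : (ℝ×ℝ)×ℝ → ℝ) = μX := by
        rw [← Measure.map_map measurable_fst measurable_fst, hπ,
          Measure.map_fst_prod, measure_univ, one_smul,
          Measure.map_fst_prod, measure_univ, one_smul]
      exact (ae_map_iff (measurable_fst.comp measurable_fst).aemeasurable
        measurableSet_Icc).mp (by rw [hmm]; exact hXaeμ)
    have hZμZ : Integrable (fun z : ℝ => |z|) μZ := by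
      rw [hμZ]
      exact (integrable_map_measure measurable_abs.aestronglyMeasurable
        hZmeas.aemeasurable).mpr hZabs
    have hbndπ : Integrable (fun q : (ℝ×ℝ)×ℝ => (C0 + L*M + L*|q.2|) * (b - a)) π := by
      have hsnd : π.map Prod.snd = μZ := by
        rw [hπ, Measure.map_snd_prod, measure_univ, one_smul]
      have hint : Integrable (fun z : ℝ => (C0 + L*M + L*|z|) * (b - a)) μZ :=
        ((integrable_const (C0 + L*M)).add (hZμZ.const_mul _)).mul_const _
      rw [← hsnd] at hint
      exact (integrable_map_measure
        (((measurable_const.add (measurable_abs.const_mul _)).mul_const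
          _).aestronglyMeasurable) measurable_snd.aemeasurable).mp hint
    have hQsub : ∀ ξ ∈ Set.Icc a b, ∀ lam : ℝ, |Q (ξ, lam) - ξ| ≤ b - a := by
      intro ξ hξ lam
      have hmem := dualQ_mem hmono hx0 hxN hξ lam
      exact abs_le.mpr ⟨by linarith [hmem.1, hξ.2], by linarith [hmem.2, hξ.1]⟩
    have hgint : Integrable g π := by
      refine Integrable.mono' hbndπ hgmeas.aestronglyMeasurable ?_
      filter_upwards [haeπ] with q hq
      simp only [hg, Real.norm_eq_abs, abs_mul]
      have hd : |deriv F (q.1.1 + q.2)| ≤ C0 + L*M + L*|q.2| := by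
        have h3 := hderiv_bound (q.1.1 + q.2)
        have h4 : |q.1.1 + q.2| ≤ M + |q.2| := le_trans (abs_add_le _ _) (by gcongr; exact hM _ hq)
        have h5 := mul_le_mul_of_nonneg_left h4 L.coe_nonneg
        linarith
      have h2' : |Q (q.1.1, q.1.2) - q.1.1| ≤ b - a := hQsub _ hq q.1.2
      have hC00 : 0 ≤ C0 := abs_nonneg _
      have hL0 : (0:ℝ) ≤ L := L.2
      calc |deriv F (q.1.1 + q.2)| * |Q q.1 - q.1.1|
          ≤ (C0 + L*M + L*|q.2|) * (b - a) := by
            apply mul_le_mul hd ?_ (abs_nonneg _) (by positivity)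
            simpa using h2'
      _ = (C0 + L*M + L*|q.2|) * (b - a) := rfl
    have hstep1 : ∫ ω, deriv F (X ω + Z ω) * (Y ω - X ω) ∂P = ∫ q, g q ∂π := by
      have he : (fun ω => deriv F (X ω + Z ω) * (Y ω - X ω))
          = fun ω => g ((X ω, Λ ω), Z ω) := rfl
      rw [he, ← h2,
        integral_map ((hXmeas.prodMk hΛmeas).prodMk hZmeas).aemeasurable
          hgmeas.aestronglyMeasurable]
    set K : ℝ → ℝ := fun t => ∫ z, deriv F (t + z) ∂μZ with hK
    have hKmeas : StronglyMeasurable K :=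
      (Continuous.stronglyMeasurable
        (hderiv_cont.comp (continuous_fst.add continuous_snd)
          : Continuous (fun p : ℝ × ℝ => deriv F (p.1 + p.2)))).integral_prod_right'
    have hstep2 : ∫ q, g q ∂π = ∫ w, K w.1 * (Q w - w.1) ∂(μX.prod μΛ) := by
      rw [hπ, integral_prod g hgint]
      apply integral_congr_ae
      apply Filter.Eventually.of_forall
      intro w
      simp only [hg]
      rw [integral_mul_const, hK]
    set CZ : ℝ := ∫ z, |z| ∂μZ with hCZ
    have hintd : Integrable (fun z : ℝ => C0 + L*M + L*|z|) μZ :=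
      (integrable_const (C0 + L*M)).add (hZμZ.const_mul _)
    have hKbound : ∀ ξ ∈ Set.Icc a b, |K ξ| ≤ C0 + L*M + L*CZ := by
      intro ξ hξ
      have hb1 : ∀ z : ℝ, |deriv F (ξ + z)| ≤ C0 + L*M + L*|z| := by
        intro z
        have h3 := hderiv_bound (ξ + z)
        have h4 : |ξ + z| ≤ M + |z| := le_trans (abs_add_le _ _) (by gcongr; exact hM _ hξ)
        have h5 := mul_le_mul_of_nonneg_left h4 L.coe_nonneg
        linarith
      have hintF : Integrable (fun z : ℝ => |deriv F (ξ + z)|) μZ := by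
        refine Integrable.mono' hintd
          ((hderiv_cont.measurable.comp (measurable_const.add measurable_id)).abs
            ).aestronglyMeasurable (Filter.Eventually.of_forall (fun z => ?_))
        rw [Real.norm_eq_abs, abs_abs]
        exact hb1 z
      calc |K ξ| ≤ ∫ z, |deriv F (ξ + z)| ∂μZ := by
            rw [hK]
            simpa [Real.norm_eq_abs] using
              norm_integral_le_integral_norm (fun z => deriv F (ξ + z)) (μ := μZ)
        _ ≤ ∫ z, (C0 + L*M + L*|z|) ∂μZ :=
            integral_mono hintF hintd hb1
        _ = C0 + L*M + L*CZ := by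
            rw [integral_add (integrable_const _) (hZμZ.const_mul _),
              integral_const, probReal_univ, one_smul,
              integral_const_mul, hCZ]
    have hC1nn : 0 ≤ C0 + L*M + L*CZ :=
      le_trans (abs_nonneg _) (hKbound a ⟨le_rfl, le_of_lt hab⟩)
    have haeXΛ : ∀ᵐ w ∂(μX.prod μΛ), w.1 ∈ Set.Icc a b := by
      have hmm : (μX.prod μΛ).map Prod.fst = μX := by
        rw [Measure.map_fst_prod, measure_univ, one_smul]
      exact (ae_map_iff measurable_fst.aemeasurable measurableSet_Icc).mp
        (by rw [hmm]; exact hXaeμ)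
    have hInt2 : Integrable (fun w : ℝ × ℝ => K w.1 * (Q w - w.1)) (μX.prod μΛ) := by
      refine Integrable.mono' (integrable_const ((C0 + L*M + L*CZ) * (b-a)))
        ((hKmeas.measurable.comp measurable_fst).mul
          (hQmeas.sub measurable_fst)).aestronglyMeasurable ?_
      filter_upwards [haeXΛ] with w hw
      rw [Real.norm_eq_abs, abs_mul]
      apply mul_le_mul (hKbound _ hw) ?_ (abs_nonneg _) hC1nn
      simpa using hQsub _ hw w.2
    have hstep3 : ∫ w, K w.1 * (Q w - w.1) ∂(μX.prod μΛ) = 0 := by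
      rw [integral_prod _ hInt2]
      have hae0 : ∀ᵐ ξ ∂μX, (∫ lam, K ξ * (Q (ξ, lam) - ξ) ∂μΛ) = 0 := by
        filter_upwards [hXaeμ] with ξ hξ
        have hQint : Integrable (fun lam => Q (ξ, lam)) μΛ := integrable_dualQ_lam ξ
        rw [integral_const_mul, integral_sub hQint (integrable_const ξ)]
        have : ∫ lam, Q (ξ, lam) ∂μΛ = ξ := integral_dualQ hmono hx0 hxN hξ
        rw [this, integral_const, probReal_univ, one_smul, sub_self, mul_zero]
      rw [integral_congr_ae hae0, integral_zero]
    rw [hstep1, hstep2, hstep3]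
  -- assemble
  have hsplit : ∫ ω, F (Y ω + Z ω) ∂P - ∫ ω, F (X ω + Z ω) ∂P
      = ∫ ω, (F (Y ω + Z ω) - F (X ω + Z ω) - deriv F (X ω + Z ω) * (Y ω - X ω)) ∂P := by
    have e1 : ∫ ω, (F (Y ω + Z ω) - F (X ω + Z ω) - deriv F (X ω + Z ω) * (Y ω - X ω)) ∂P
        = ∫ ω, (F (Y ω + Z ω) - F (X ω + Z ω)) ∂P
          - ∫ ω, deriv F (X ω + Z ω) * (Y ω - X ω) ∂P := integral_sub (hintY.sub hintX) hintG
    have e2 : ∫ ω, (F (Y ω + Z ω) - F (X ω + Z ω)) ∂P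
        = ∫ ω, F (Y ω + Z ω) ∂P - ∫ ω, F (X ω + Z ω) ∂P := integral_sub hintY hintX
    rw [e1, e2, hzero, sub_zero]
  have habs : |∫ ω, F (X ω + Z ω) ∂P - ∫ ω, F (Y ω + Z ω) ∂P|
      = |∫ ω, (F (Y ω + Z ω) - F (X ω + Z ω) - deriv F (X ω + Z ω) * (Y ω - X ω)) ∂P| := by
    rw [← hsplit, abs_sub_comm]
  calc |∫ ω, F (X ω + Z ω) ∂P - ∫ ω, F (Y ω + Z ω) ∂P|
      = |∫ ω, (F (Y ω + Z ω) - F (X ω + Z ω) - deriv F (X ω + Z ω) * (Y ω - X ω)) ∂P| := habs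
    _ ≤ ∫ ω, |F (Y ω + Z ω) - F (X ω + Z ω) - deriv F (X ω + Z ω) * (Y ω - X ω)| ∂P := by
        simpa [Real.norm_eq_abs] using norm_integral_le_integral_norm
          (fun ω => F (Y ω + Z ω) - F (X ω + Z ω) - deriv F (X ω + Z ω) * (Y ω - X ω)) (μ := P)
    _ ≤ ∫ ω, (L : ℝ) * |X ω - Y ω| ^ 2 ∂P := by
        refine integral_mono hintD.abs (hsq.const_mul _) (fun ω => ?_)
        have h := taylor_bound hF hFlip (X ω + Z ω) (Y ω + Z ω)
        have he : Y ω + Z ω - (X ω + Z ω) = Y ω - X ω := by ring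
        rw [he] at h
        have he2 : |Y ω - X ω| = |X ω - Y ω| := abs_sub_comm _ _
        rw [he2] at h
        exact h
    _ = (L : ℝ) * ∫ ω, |X ω - Y ω| ^ 2 ∂P := integral_const_mul _ _
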